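/- Let ε > 0, σ² > 0, and for n ∈ ℕ with n ≥ 1 define T(n) = 1/(1+ε) + Σ_{i=1}^{n} (1/(1+ε)^{i+1}) · (Γ(n+1)·Γ(n+σ²−i))/(Γ(n+σ²)·Γ(n+1−i)), where the i = n term is interpreted via falling factorials as Π_{j=0}^{i−1}(n−j)/(n−1+σ²−j). Then T(0) = 1/(1+ε) and T satisfies the recursion T(n) = (1 + (n/(n−1+σ²))·T(n−1))/(1+ε) for all n ≥ 1. -/

import Mathlib

open Finset

set_option maxHeartbeats 1000000 in

theorem stmt_15 (ε σ2 : ℝ) (hε : 0 < ε) (hσ : 0 < σ2)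
    (T : ℕ → ℝ)
    (hT : ∀ n : ℕ, T n = 1 / (1 + ε) + ∑ i ∈ Finset.Icc 1 n,
      (1 / (1 + ε) ^ (i + 1)) * ∏ j ∈ Finset.range i, ((n : ℝ) - j) / ((n : ℝ) - 1 + σ2 - j)) :
    T 0 = 1 / (1 + ε) ∧
    ∀ n : ℕ, 1 ≤ n →
      T n = (1 + ((n : ℝ) / ((n : ℝ) - 1 + σ2)) * T (n - 1)) / (1 + ε) := by
  have hε1 : (1:ℝ) + ε ≠ 0 := by positivity
  refine ⟨by simp [hT 0], ?_⟩
  intro n hn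
  obtain ⟨m, rfl⟩ : ∃ m, n = m + 1 := ⟨n - 1, by omega⟩
  have hden : ((m:ℝ) + σ2) ≠ 0 := by positivity
  simp only [Nat.add_sub_cancel]
  rw [hT (m+1), hT m]
  push_cast
  have key : ∑ i ∈ Finset.Icc 1 (m+1),
      (1 / (1 + ε) ^ (i + 1)) * ∏ j ∈ Finset.range i, (((m:ℝ)+1) - j) / (((m:ℝ)+1) - 1 + σ2 - j)
    = (((m:ℝ)+1) / ((m:ℝ) + σ2)) * ((1/(1+ε)) *
      (1/(1+ε) + ∑ i ∈ Finset.Icc 1 m,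
        (1 / (1 + ε) ^ (i + 1)) * ∏ j ∈ Finset.range i, ((m:ℝ) - j) / ((m:ℝ) - 1 + σ2 - j))) := by
    rw [← Finset.Ico_add_one_right_eq_Icc, ← Finset.Ico_add_one_right_eq_Icc,
      Finset.sum_Ico_eq_sum_range, Finset.sum_Ico_eq_sum_range]
    simp only [Nat.succ_sub_one, Nat.add_sub_cancel]
    rw [Finset.sum_range_succ']
    have hterm : ∀ i : ℕ, (1 / (1 + ε) ^ (1 + (i+1) + 1)) *
        ∏ j ∈ Finset.range (1+(i+1)), (((m:ℝ)+1) - j) / (((m:ℝ)+1) - 1 + σ2 - j)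
      = (((m:ℝ)+1) / ((m:ℝ) + σ2)) * ((1/(1+ε)) *
        ((1 / (1 + ε) ^ ((1+i) + 1)) *
          ∏ j ∈ Finset.range (1+i), ((m:ℝ) - j) / ((m:ℝ) - 1 + σ2 - j))) := by
      intro i
      rw [show 1+(i+1) = (1+i)+1 from by ring, Finset.prod_range_succ']
      have hc : ∀ j ∈ Finset.range (1+i),
          (((m:ℝ)+1) - ((j:ℕ)+1 : ℕ)) / (((m:ℝ)+1) - 1 + σ2 - ((j:ℕ)+1 : ℕ))
          = ((m:ℝ) - j) / ((m:ℝ) - 1 + σ2 - j) := by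
        intro j _
        push_cast
        ring_nf
      rw [Finset.prod_congr rfl hc]
      push_cast
      simp only [sub_zero, add_sub_cancel_right]
      field_simp
      ring
    rw [Finset.sum_congr rfl (fun i _ => hterm i)]
    simp only [← Finset.mul_sum]
    rw [Finset.prod_range_one]
    generalize (∑ i ∈ Finset.range m,
      (1 / (1 + ε) ^ (1 + i + 1)) *
        ∏ j ∈ Finset.range (1+i), ((m:ℝ) - j) / ((m:ℝ) - 1 + σ2 - j)) = S
    push_cast
    simp only [sub_zero, add_sub_cancel_right]
    field_simp
    ring
  rw [key]
  generalize (∑ i ∈ Finset.Icc 1 m,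
    (1 / (1 + ε) ^ (i + 1)) * ∏ j ∈ Finset.range i, ((m:ℝ) - j) / ((m:ℝ) - 1 + σ2 - j)) = S
  have h2 : ((m:ℝ) + 1 - 1 + σ2) = (m:ℝ) + σ2 := by ring
  rw [h2]
  field_simp
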